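/- Let ω = exp(2π√−1/3). For all complex numbers c1, c2, β0, β3, the product over all i1, i2, i3 ∈ {0, 1, 2} of (β0^4 + ω^{i1}·(c1·β0)^4 + ω^{i2}·(c2·β0)^4 + ω^{i3}·β3^4) equals the product over all i1, i2 ∈ {0, 1, 2} of ((1 + ω^{i1}·c1^4 + ω^{i2}·c2^4)^3·(β0^3)^4 + (β3^3)^4). -/
import Mathlib


noncomputable def ω : ℂ := Complex.exp (2 * Real.pi * Complex.I / 3)

lemma ω_prim : IsPrimitiveRoot ω 3 := by
  have := Complex.isPrimitiveRoot_exp 3 (by norm_num)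
  simpa [ω] using this

lemma ω_cube : ω ^ 3 = 1 := ω_prim.pow_eq_one

lemma ω_sum : 1 + ω + ω ^ 2 = 0 := by
  have h := ω_prim.geom_sum_eq_zero (by norm_num)
  have : ∑ i ∈ Finset.range 3, ω ^ i = 0 := h
  simpa [Finset.sum_range_succ] using this

theorem line_cut_defining_equation (c1 c2 β0 β3 : ℂ) :
    (∏ i1 : Fin 3, ∏ i2 : Fin 3, ∏ i3 : Fin 3,
        (β0 ^ 4 + ω ^ (i1 : ℕ) * (c1 * β0) ^ 4 + ω ^ (i2 : ℕ) * (c2 * β0) ^ 4 +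
          ω ^ (i3 : ℕ) * β3 ^ 4)) =
      ∏ i1 : Fin 3, ∏ i2 : Fin 3,
        ((1 + ω ^ (i1 : ℕ) * c1 ^ 4 + ω ^ (i2 : ℕ) * c2 ^ 4) ^ 3 * (β0 ^ 3) ^ 4 +
          (β3 ^ 3) ^ 4) := by
  refine Finset.prod_congr rfl fun i1 _ => Finset.prod_congr rfl fun i2 _ => ?_
  rw [Fin.prod_univ_three]
  set A : ℂ := β0 ^ 4 + ω ^ (i1 : ℕ) * (c1 * β0) ^ 4 + ω ^ (i2 : ℕ) * (c2 * β0) ^ 4 with hA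
  set B : ℂ := β3 ^ 4 with hB
  have key : (A + ω ^ (0 : ℕ) * B) * (A + ω ^ (1 : ℕ) * B) * (A + ω ^ (2 : ℕ) * B)
      = A ^ 3 + B ^ 3 := by
    have h1 := ω_cube
    have h2 := ω_sum
    linear_combination (A ^ 2 * B + A * B ^ 2) * h2 + (A * B ^ 2 + B ^ 3) * h1
  calc (A + ω ^ ((0 : Fin 3) : ℕ) * B) * (A + ω ^ ((1 : Fin 3) : ℕ) * B) *
        (A + ω ^ ((2 : Fin 3) : ℕ) * B)
      = A ^ 3 + B ^ 3 := by
        simpa using key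
    _ = (1 + ω ^ (i1 : ℕ) * c1 ^ 4 + ω ^ (i2 : ℕ) * c2 ^ 4) ^ 3 * (β0 ^ 3) ^ 4 +
          (β3 ^ 3) ^ 4 := by
        rw [hA, hB]; ring
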